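/- arXiv:1908.02657 — 2 statements merged into one kernel-verified Lean document; each statement's English description precedes it below -/
import Mathlib

section
/- Let 0 < a < 1/8 and let u solve u'' + u' + a·u = 0 with u(0) = u₀, u'(0) = u₁. Then there exists a constant C > 0, independent of a, u₀, u₁, such that |u'(t)| ≤ C·( a·e^{-a t}(|u₀| + |u₁|) + e^{-t/2}|u₁| ) for all t ≥ 0. -/
lemma exp_ode_aux (r : ℂ) (f : ℝ → ℂ)
    (hf : ∀ t : ℝ, 0 ≤ t → HasDerivAt f (r * f t) t) :
    ∀ t : ℝ, 0 ≤ t → f t = Complex.exp (r * t) * f 0 := by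
  intro T hT
  set g : ℝ → ℂ := fun t => Complex.exp (-r * t) * f t with hg
  have hgd : ∀ t, 0 ≤ t → HasDerivAt g 0 t := by
    intro t ht
    have hlin : HasDerivAt (fun t : ℝ => -r * (t : ℂ)) (-r) t := by
      simpa using (Complex.ofRealCLM.hasDerivAt (x := t)).const_mul (-r)
    have hexp : HasDerivAt (fun t : ℝ => Complex.exp (-r * t))
        (Complex.exp (-r * t) * (-r)) t := hlin.cexp
    have := hexp.mul (hf t ht)
    refine this.congr_deriv ?_
    ring
  have hcont : ContinuousOn g (Set.Icc 0 T) := fun t ht =>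
    ((hgd t ht.1).continuousAt).continuousWithinAt
  have hconst := constant_of_has_deriv_right_zero hcont
    (fun t ht => ((hgd t ht.1).hasDerivWithinAt))
  have hT' := hconst T (Set.mem_Icc.2 ⟨hT, le_refl T⟩)
  have hg0 : g 0 = f 0 := by simp [hg]
  have : Complex.exp (-r * T) * f T = f 0 := by rw [← hg0]; exact hT'
  have h3 : Complex.exp (r * T) * Complex.exp (-r * T) = 1 := by
    rw [← Complex.exp_add]; ring_nf; exact Complex.exp_zero
  calc f T = (Complex.exp (r*T) * Complex.exp (-r*T)) * f T := by rw [h3, one_mul]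
    _ = Complex.exp (r*T) * (Complex.exp (-r*T) * f T) := by ring
    _ = Complex.exp (r*T) * f 0 := by rw [this]

set_option maxHeartbeats 1000000 in
theorem damped_ode_low_freq_decay_deriv :
    ∃ C : ℝ, 0 < C ∧
      ∀ a : ℝ, 0 < a → a < 1/8 → ∀ u : ℝ → ℂ,
        (∀ t : ℝ, 0 ≤ t → DifferentiableAt ℝ u t) →
        (∀ t : ℝ, 0 ≤ t → DifferentiableAt ℝ (deriv u) t) →
        (∀ t : ℝ, 0 ≤ t → deriv (deriv u) t + deriv u t + (a:ℂ) * u t = 0) →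
        ∀ u₀ u₁ : ℂ, u 0 = u₀ → deriv u 0 = u₁ →
        ∀ t : ℝ, 0 ≤ t →
          ‖deriv u t‖
            ≤ C * (a * Real.exp (-a*t) * (‖u₀‖ + ‖u₁‖)
                    + Real.exp (-t/2) * ‖u₁‖) := by
  refine ⟨8, by norm_num, ?_⟩
  intro a ha ha8 u h1 h2 hode u₀ u₁ hu0 hu1 t ht
  set s : ℝ := Real.sqrt (1 - 4*a) with hs
  have h4a : (0:ℝ) ≤ 1 - 4*a := by nlinarith
  have hs2 : s^2 = 1 - 4*a := Real.sq_sqrt h4a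
  have hs_half : 1/2 ≤ s := by
    nlinarith [Real.sqrt_nonneg (1 - 4*a), hs2]
  have hs_le1 : s ≤ 1 := by nlinarith [Real.sqrt_nonneg (1 - 4*a)]
  set r₁ : ℝ := (-1 + s)/2 with hr₁
  set r₂ : ℝ := (-1 - s)/2 with hr₂
  have hsum : r₁ + r₂ = -1 := by rw [hr₁, hr₂]; ring
  have hprod : r₁ * r₂ = a := by rw [hr₁, hr₂]; nlinarith [hs2]
  have hsumC : (r₁:ℂ) + (r₂:ℂ) = -1 := by exact_mod_cast hsum
  have hprodC : (r₁:ℂ) * (r₂:ℂ) = (a:ℂ) := by exact_mod_cast hprod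
  -- the two first-order solutions
  set w : ℝ → ℂ := fun t => deriv u t - (r₁:ℂ) * u t with hw
  set v : ℝ → ℂ := fun t => deriv u t - (r₂:ℂ) * u t with hv
  have hwd : ∀ τ : ℝ, 0 ≤ τ → HasDerivAt w ((r₂:ℂ) * w τ) τ := by
    intro τ hτ
    have hu' : HasDerivAt u (deriv u τ) τ := (h1 τ hτ).hasDerivAt
    have hu'' : HasDerivAt (deriv u) (deriv (deriv u) τ) τ := (h2 τ hτ).hasDerivAt
    have := hu''.sub (hu'.const_mul (r₁:ℂ))
    refine this.congr_deriv ?_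
    have hode' := hode τ hτ
    rw [hw]
    linear_combination hode' + (u τ) * hprodC - (deriv u τ) * hsumC
  have hvd : ∀ τ : ℝ, 0 ≤ τ → HasDerivAt v ((r₁:ℂ) * v τ) τ := by
    intro τ hτ
    have hu' : HasDerivAt u (deriv u τ) τ := (h1 τ hτ).hasDerivAt
    have hu'' : HasDerivAt (deriv u) (deriv (deriv u) τ) τ := (h2 τ hτ).hasDerivAt
    have := hu''.sub (hu'.const_mul (r₂:ℂ))
    refine this.congr_deriv ?_
    have hode' := hode τ hτ
    rw [hv]
    linear_combination hode' + (u τ) * hprodC - (deriv u τ) * hsumC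
  have hwsol := exp_ode_aux (r₂:ℂ) w hwd t ht
  have hvsol := exp_ode_aux (r₁:ℂ) v hvd t ht
  have hw0 : w 0 = u₁ - (r₁:ℂ) * u₀ := by rw [hw]; simp [hu0, hu1]
  have hv0 : v 0 = u₁ - (r₂:ℂ) * u₀ := by rw [hv]; simp [hu0, hu1]
  -- express deriv u t
  have hs_pos : (0:ℝ) < s := by linarith
  have hformula : ((s:ℂ)) * deriv u t =
      (r₁:ℂ) * Complex.exp ((r₁:ℂ) * t) * v 0 - (r₂:ℂ) * Complex.exp ((r₂:ℂ) * t) * w 0 := by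
    have h1' : (r₁:ℂ) * v t - (r₂:ℂ) * w t = ((r₁:ℂ) - (r₂:ℂ)) * deriv u t := by
      rw [hv, hw]; ring
    have hsub : (r₁:ℂ) - (r₂:ℂ) = (s:ℂ) := by
      rw [hr₁, hr₂]; push_cast; ring
    rw [← hsub, ← h1', hvsol, hwsol]; ring
  have habs : s * ‖deriv u t‖ ≤
      |r₁| * Real.exp (r₁ * t) * ‖v 0‖
      + |r₂| * Real.exp (r₂ * t) * ‖w 0‖ := by
    have := congrArg (‖·‖) hformula
    rw [norm_mul] at this
    have habs_s : ‖(s:ℂ)‖ = s := by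
      rw [Complex.norm_real, Real.norm_eq_abs, abs_of_pos hs_pos]
    rw [habs_s] at this
    rw [this]
    refine le_trans (norm_sub_le _ _) ?_
    have e1 : ‖(r₁:ℂ) * Complex.exp ((r₁:ℂ) * t) * v 0‖
        = |r₁| * Real.exp (r₁ * t) * ‖v 0‖ := by
      rw [norm_mul, norm_mul, Complex.norm_real, Complex.norm_exp]
      norm_num
    have e2 : ‖(r₂:ℂ) * Complex.exp ((r₂:ℂ) * t) * w 0‖
        = |r₂| * Real.exp (r₂ * t) * ‖w 0‖ := by
      rw [norm_mul, norm_mul, Complex.norm_real, Complex.norm_exp]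
      norm_num
    rw [e1, e2]
  -- numeric bounds
  have habs_r₁ : |r₁| ≤ 2*a := by
    rw [hr₁, abs_le]; constructor <;> nlinarith
  have habs_r₂ : |r₂| ≤ 1 := by
    rw [hr₂, abs_le]; constructor <;> nlinarith
  have hsle : s ≤ 1 - 2*a := by
    rw [hs]
    have h' : (1:ℝ) - 4*a ≤ (1-2*a)^2 := by nlinarith
    calc Real.sqrt (1-4*a) ≤ Real.sqrt ((1-2*a)^2) := Real.sqrt_le_sqrt h'
      _ = 1 - 2*a := Real.sqrt_sq (by nlinarith)
  have hexp1 : Real.exp (r₁ * t) ≤ Real.exp (-a * t) := by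
    apply Real.exp_le_exp.2
    have h'' : r₁ ≤ -a := by rw [hr₁]; linarith
    calc r₁ * t ≤ -a * t := mul_le_mul_of_nonneg_right h'' ht
      _ = -a * t := rfl
  have hexp2 : Real.exp (r₂ * t) ≤ Real.exp (-t/2) := by
    apply Real.exp_le_exp.2
    have h'' : r₂ ≤ -(1/2) := by rw [hr₂]; linarith
    have := mul_le_mul_of_nonneg_right h'' ht
    linarith
  have hv0abs : ‖v 0‖ ≤ ‖u₀‖ + ‖u₁‖ := by
    rw [hv0]
    refine le_trans (norm_sub_le _ _) ?_
    rw [norm_mul, Complex.norm_real, Real.norm_eq_abs]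
    have := mul_le_mul_of_nonneg_right habs_r₂ (norm_nonneg u₀)
    linarith
  have hw0abs : ‖w 0‖ ≤ ‖u₁‖ + 2*a * ‖u₀‖ := by
    rw [hw0]
    refine le_trans (norm_sub_le _ _) ?_
    rw [norm_mul, Complex.norm_real, Real.norm_eq_abs]
    have := mul_le_mul_of_nonneg_right habs_r₁ (norm_nonneg u₀)
    linarith
  have hexp3 : Real.exp (-t/2) ≤ Real.exp (-a*t) := by
    apply Real.exp_le_exp.2
    have := mul_le_mul_of_nonneg_right (show a ≤ 1/2 by linarith) ht
    linarith
  -- put it together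
  set M0 := ‖u₀‖
  set M1 := ‖u₁‖
  set A := Real.exp (-a*t)
  set B := Real.exp (-t/2)
  have hA : 0 < A := Real.exp_pos _
  have hB : 0 < B := Real.exp_pos _
  have hM0 : 0 ≤ M0 := norm_nonneg _
  have hM1 : 0 ≤ M1 := norm_nonneg _
  have hD : 0 ≤ ‖deriv u t‖ := norm_nonneg _
  have hr1exp : 0 ≤ Real.exp (r₁ * t) := (Real.exp_pos _).le
  have hr2exp : 0 ≤ Real.exp (r₂ * t) := (Real.exp_pos _).le
  have hvabs : 0 ≤ ‖v 0‖ := norm_nonneg _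
  have hwabs : 0 ≤ ‖w 0‖ := norm_nonneg _
  have key : s * ‖deriv u t‖ ≤
      2*a * A * (M0 + M1) + B * (M1 + 2*a * M0) := by
    refine le_trans habs ?_
    have t1 : |r₁| * Real.exp (r₁ * t) * ‖v 0‖ ≤ 2*a * A * (M0 + M1) := by
      have h' : |r₁| * Real.exp (r₁ * t) ≤ 2*a * A :=
        mul_le_mul habs_r₁ hexp1 hr1exp (by positivity)
      exact mul_le_mul h' hv0abs hvabs (by positivity)
    have t2 : |r₂| * Real.exp (r₂ * t) * ‖w 0‖ ≤ B * (M1 + 2*a*M0) := by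
      have h' : |r₂| * Real.exp (r₂ * t) ≤ 1 * B :=
        mul_le_mul habs_r₂ hexp2 hr2exp (by norm_num)
      have := mul_le_mul h' hw0abs hwabs (by positivity)
      linarith [this]
    linarith
  have final : ‖deriv u t‖ ≤ 2 * (2*a * A * (M0 + M1) + B * (M1 + 2*a*M0)) := by
    have h5 : ‖deriv u t‖ * (1/2) ≤ ‖deriv u t‖ * s :=
      mul_le_mul_of_nonneg_left hs_half hD
    have h6 : ‖deriv u t‖ * s = s * ‖deriv u t‖ := mul_comm _ _
    linarith
  refine le_trans final ?_
  -- B * 2a M0 ≤ A * 2a M0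
  have : B * (2*a*M0) ≤ A * (2*a*M0) := by
    apply mul_le_mul_of_nonneg_right hexp3; positivity
  have h7 : 0 ≤ A * M1 := by positivity
  have h8 : 0 ≤ B * M1 := by positivity
  have h9 : 0 ≤ a * (A * M1) := by positivity
  nlinarith [this, h7, h8, h9]
end

section
/- Let a > 0 and let u solve u'' + u' + a·u = 0 with u(0) = u₀, u'(0) = u₁. Then there exists a constant C > 0, independent of a, u₀, u₁, such that |u(t)| ≤ C(|u₀| + |u₁|) for all t ≥ 0. -/
open scoped RealInnerProductSpace

lemma aux_antitone (E E' : ℝ → ℝ)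
    (hE : ∀ t : ℝ, 0 ≤ t → HasDerivAt E (E' t) t)
    (hE' : ∀ t : ℝ, 0 ≤ t → E' t ≤ 0) :
    ∀ t : ℝ, 0 ≤ t → E t ≤ E 0 := by
  intro t ht
  have hA : AntitoneOn E (Set.Ici (0:ℝ)) := by
    apply antitoneOn_of_deriv_nonpos (convex_Ici 0)
    · intro x hx
      exact (hE x hx).differentiableAt.continuousAt.continuousWithinAt
    · intro x hx
      rw [interior_Ici] at hx
      exact ((hE x hx.le).differentiableAt).differentiableWithinAt
    · intro x hx
      rw [interior_Ici] at hx
      rw [(hE x hx.le).deriv]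
      exact hE' x hx.le
  exact hA Set.self_mem_Ici ht ht

lemma aux_inner_self_deriv (f : ℝ → ℂ) (f' : ℂ) (x : ℝ) (hf : HasDerivAt f f' x) :
    HasDerivAt (fun s => ⟪f s, f s⟫) (2 * ⟪f x, f'⟫) x := by
  have h := hf.inner ℝ hf
  simpa [real_inner_comm, two_mul] using h

theorem damped_ode_uniform_bound :
    ∃ C : ℝ, 0 < C ∧
      ∀ a : ℝ, 0 < a → ∀ u : ℝ → ℂ,
        (∀ t : ℝ, 0 ≤ t → DifferentiableAt ℝ u t) →
        (∀ t : ℝ, 0 ≤ t → DifferentiableAt ℝ (deriv u) t) →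
        (∀ t : ℝ, 0 ≤ t → deriv (deriv u) t + deriv u t + (a:ℂ) * u t = 0) →
        ∀ u₀ u₁ : ℂ, u 0 = u₀ → deriv u 0 = u₁ →
        ∀ t : ℝ, 0 ≤ t →
          ‖u t‖ ≤ C * (‖u₀‖ + ‖u₁‖) := by
  refine ⟨3, by norm_num, ?_⟩
  intro a ha u hd1 hd2 hode u₀ u₁ hu0 hu1 t ht
  set v : ℝ → ℂ := fun s => u s + deriv u s with hv
  have hu : ∀ s : ℝ, 0 ≤ s → HasDerivAt u (deriv u s) s :=
    fun s hs => (hd1 s hs).hasDerivAt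
  have hu' : ∀ s : ℝ, 0 ≤ s → HasDerivAt (deriv u) (deriv (deriv u) s) s :=
    fun s hs => (hd2 s hs).hasDerivAt
  have hddu : ∀ s : ℝ, 0 ≤ s → deriv (deriv u) s = -(deriv u s) - (a:ℂ) * u s := by
    intro s hs
    have h := hode s hs
    linear_combination h
  have hvd : ∀ s : ℝ, 0 ≤ s → HasDerivAt v (-((a:ℂ) * u s)) s := by
    intro s hs
    have h := (hu s hs).add (hu' s hs)
    rw [hddu s hs] at h
    refine h.congr_deriv ?_
    ring
  have hIu : ∀ z : ℂ, ⟪z, z⟫ = ‖z‖ ^ 2 := fun z => by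
    rw [real_inner_self_eq_norm_sq]
  have hsmul : ∀ (z w : ℂ), ⟪z, (a:ℂ) * w⟫ = a * ⟪z, w⟫ := by
    intro z w
    rw [← Complex.real_smul, real_inner_smul_right]
  set A0 := ‖u₀‖ with hA0def
  set A1 := ‖u₁‖ with hA1def
  have hA0 : 0 ≤ A0 := norm_nonneg _
  have hA1 : 0 ≤ A1 := norm_nonneg _
  have hXn : 0 ≤ ‖u t‖ := norm_nonneg _
  rcases le_total 1 a with h1a | ha1
  · -- large a : energy E₁
    set E : ℝ → ℝ := fun s => a * ⟪u s, u s⟫ + ⟪deriv u s, deriv u s⟫ with hE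
    have hEd : ∀ s : ℝ, 0 ≤ s →
        HasDerivAt E (-(2 * ⟪deriv u s, deriv u s⟫)) s := by
      intro s hs
      have h1 := (aux_inner_self_deriv u (deriv u s) s (hu s hs)).const_mul a
      have h2 := aux_inner_self_deriv (deriv u) (deriv (deriv u) s) s (hu' s hs)
      have h := h1.add h2
      refine h.congr_deriv ?_
      rw [hddu s hs, inner_sub_right, inner_neg_right, hsmul,
        real_inner_comm (deriv u s) (u s)]
      ring
    have hmono := aux_antitone E _ hEd
      (fun s hs => by
        have := real_inner_self_nonneg (x := deriv u s)
        linarith) t ht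
    have hEt : a * ‖u t‖ ^ 2 + ‖deriv u t‖ ^ 2 ≤
        a * A0 ^ 2 + A1 ^ 2 := by
      have : E t ≤ E 0 := hmono
      rw [hE] at this
      simp only [hu0, hu1] at this
      rw [hIu, hIu, hIu, hIu] at this
      exact this
    have h' : a * ‖u t‖ ^ 2 ≤ a * (A0 ^ 2 + A1 ^ 2) := by
      have hd : (0:ℝ) ≤ (a - 1) * A1 ^ 2 :=
        mul_nonneg (by linarith) (sq_nonneg _)
      nlinarith [sq_nonneg (‖deriv u t‖)]
    have hX2 : ‖u t‖ ^ 2 ≤ A0 ^ 2 + A1 ^ 2 :=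
      (mul_le_mul_iff_right₀ ha).mp h'
    nlinarith [mul_nonneg hA0 hA1]
  · -- small a : energy E₂ and Duhamel
    set M : ℝ := 2 * A0 + A1 with hM
    have hM0 : 0 ≤ M := by positivity
    set E : ℝ → ℝ := fun s => ⟪v s, v s⟫ + a * ⟪u s, u s⟫ with hE
    have hEd : ∀ s : ℝ, 0 ≤ s →
        HasDerivAt E (-(2 * a * ⟪u s, u s⟫)) s := by
      intro s hs
      have h1 := aux_inner_self_deriv v (-((a:ℂ) * u s)) s (hvd s hs)
      have h2 := (aux_inner_self_deriv u (deriv u s) s (hu s hs)).const_mul a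
      have h := h1.add h2
      refine h.congr_deriv ?_
      have hder : deriv u s = v s - u s := by
        rw [hv]; ring
      rw [hder, inner_neg_right, hsmul, inner_sub_right,
        real_inner_comm (v s) (u s)]
      ring
    have hmono := aux_antitone E _ hEd
      (fun s hs => by
        have h0 := real_inner_self_nonneg (x := u s)
        nlinarith)
    have hv0 : v 0 = u₀ + u₁ := by rw [hv]; simp [hu0, hu1]
    have hvb : ∀ s : ℝ, 0 ≤ s → ‖v s‖ ≤ M := by
      intro s hs
      have h := hmono s hs
      rw [hE] at h
      simp only [hv0, hu0] at h
      rw [hIu, hIu, hIu, hIu] at h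
      have habs : ‖u₀ + u₁‖ ≤ A0 + A1 := norm_add_le _ _
      have h2 : ‖v s‖ ^ 2 ≤ (A0 + A1) ^ 2 + A0 ^ 2 := by
        nlinarith [norm_nonneg (u₀ + u₁), norm_nonneg (u s),
          real_inner_self_nonneg (x := u s), hIu (u s),
          mul_nonneg (le_of_lt ha) (sq_nonneg (‖u 0‖))]
      nlinarith [norm_nonneg (v s), mul_nonneg hA0 hA1, sq_nonneg A0]
    -- Duhamel
    set f : ℝ → ℂ := fun s => Real.exp s • u s with hf
    have hfd : ∀ s ∈ Set.Ico (0:ℝ) t, HasDerivWithinAt f (Real.exp s • v s) (Set.Ici s) s := by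
      intro s hs
      have h := (Real.hasDerivAt_exp s).smul (hu s hs.1)
      have : HasDerivAt f (Real.exp s • v s) s := by
        refine h.congr_deriv ?_
        simp only [hv]
        module
      exact this.hasDerivWithinAt
    have hcont : ContinuousOn f (Set.Icc 0 t) := fun s hs =>
      ((Real.continuous_exp.continuousAt).smul (hd1 s hs.1).continuousAt).continuousWithinAt
    have hB : ∀ x : ℝ, HasDerivAt (fun s => (A0 + M) * Real.exp s) ((A0 + M) * Real.exp x) x :=
      fun x => (Real.hasDerivAt_exp x).const_mul _
    have ha0 : ‖f 0‖ ≤ (A0 + M) * Real.exp 0 := by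
      rw [hf]
      simp [Real.exp_zero, norm_smul, hu0]
      linarith
    have hbound : ∀ x ∈ Set.Ico (0:ℝ) t, ‖Real.exp x • v x‖ ≤ (A0 + M) * Real.exp x := by
      intro x hx
      rw [norm_smul, Real.norm_eq_abs, abs_of_pos (Real.exp_pos x)]
      have := hvb x hx.1
      have hex := (Real.exp_pos x).le
      nlinarith
    have hmain := image_norm_le_of_norm_deriv_right_le_deriv_boundary hcont hfd ha0 hB hbound
      (Set.mem_Icc.2 ⟨ht, le_refl t⟩)
    rw [hf] at hmain
    simp only [norm_smul, Real.norm_eq_abs, abs_of_pos (Real.exp_pos t)] at hmain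
    have hex := Real.exp_pos t
    have : ‖u t‖ ≤ A0 + M := by
      by_contra hc
      push_neg at hc
      nlinarith
    rw [hM] at this
    linarith
end
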